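/- Explicit value of the first-passage probabilities in the transient regime: assume α > 1 and let m be the unique positive real with Σᵣ k⁺(r)/(m + k⁻(r)) = 1. Then for every i ∈ Fin d, the first-passage probability satisfies F([i], o) = k⁻(i)/(m + k⁻(i)); in particular 0 < F([i], o) < 1. -/
import Mathlib

open Finset

section stmt15aux

variable {d : ℕ}
lemma stmt15_pair_eq {x z : List (Fin d)} {i j : Fin d} (h : x ++ [i] = z ++ [j]) :
    x = z ∧ i = j := by
  have := List.append_inj' h rfl
  simpa using this

variable (kp km : Fin d → ℝ) (K : ℝ)
variable (p : List (Fin d) → List (Fin d) → ℝ)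
variable (f : ℕ → List (Fin d) → List (Fin d) → ℝ)

lemma stmt15_p_nonneg (hkp : ∀ i, 0 < kp i) (hkm : ∀ i, 0 < km i) (hK : 0 < K)
    (hp_root : ∀ i : Fin d, p [] [i] = kp i / K)
    (hp_up : ∀ (x : List (Fin d)) (i j : Fin d),
      p (x ++ [i]) (x ++ [i] ++ [j]) = kp j / (km i + K))
    (hp_down : ∀ (x : List (Fin d)) (i : Fin d), p (x ++ [i]) x = km i / (km i + K))
    (hp_zero : ∀ x y : List (Fin d),
      (¬ ∃ i : Fin d, y = x ++ [i]) → (¬ ∃ i : Fin d, x = y ++ [i]) → p x y = 0) :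
    ∀ x y, 0 ≤ p x y := by
  intro x y
  by_cases h1 : ∃ i : Fin d, y = x ++ [i]
  · obtain ⟨i, rfl⟩ := h1
    rcases x.eq_nil_or_concat with rfl | ⟨w, l, rfl⟩
    · rw [show ([] : List (Fin d)) ++ [i] = [i] from rfl, hp_root]
      have := hkp i
      positivity
    · rw [List.concat_eq_append, hp_up]
      have := hkm l
      have := hkp i
      positivity
  · by_cases h2 : ∃ i : Fin d, x = y ++ [i]
    · obtain ⟨i, rfl⟩ := h2
      rw [hp_down]
      have := hkm i
      positivity
    · rw [hp_zero _ _ h1 h2]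

/-- finite-sum form of the recursion at a nonempty source -/
lemma stmt15_rec2 (hK : 0 < K)
    (hp_up : ∀ (x : List (Fin d)) (i j : Fin d),
      p (x ++ [i]) (x ++ [i] ++ [j]) = kp j / (km i + K))
    (hp_down : ∀ (x : List (Fin d)) (i : Fin d), p (x ++ [i]) x = km i / (km i + K))
    (hp_zero : ∀ x y : List (Fin d),
      (¬ ∃ i : Fin d, y = x ++ [i]) → (¬ ∃ i : Fin d, x = y ++ [i]) → p x y = 0)
    (hfs : ∀ n : ℕ, 1 ≤ n → ∀ x y : List (Fin d),
      f (n + 1) x y = ∑' z : List (Fin d), if z = y then 0 else p x z * f n z y)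
    (n : ℕ) (hn : 1 ≤ n) (x : List (Fin d)) (i : Fin d) (y : List (Fin d)) :
    f (n+1) (x ++ [i]) y =
      (∑ j : Fin d, if x ++ [i] ++ [j] = y then 0
        else kp j / (km i + K) * f n (x ++ [i] ++ [j]) y)
      + (if x = y then 0 else km i / (km i + K) * f n x y) := by
  rw [hfs n hn]
  have hxnot : x ∉ Finset.image (fun j : Fin d => x ++ [i] ++ [j]) Finset.univ := by
    simp only [Finset.mem_image, Finset.mem_univ, true_and]
    rintro ⟨j, hj⟩
    have := congrArg List.length hj
    simp at this
  have hinj : ∀ a ∈ Finset.univ, ∀ b ∈ Finset.univ,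
      (fun j : Fin d => x ++ [i] ++ [j]) a = (fun j => x ++ [i] ++ [j]) b → a = b := by
    intro a _ b _ h
    exact (stmt15_pair_eq h).2
  have hsupp : ∀ z ∉ insert x (Finset.image (fun j : Fin d => x ++ [i] ++ [j]) Finset.univ),
      (if z = y then 0 else p (x ++ [i]) z * f n z y) = 0 := by
    intro z hz
    simp only [Finset.mem_insert, Finset.mem_image, Finset.mem_univ, true_and] at hz
    push_neg at hz
    by_cases hzy : z = y
    · simp [hzy]
    · rw [if_neg hzy]
      have hpz : p (x ++ [i]) z = 0 := by
        apply hp_zero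
        · rintro ⟨j, rfl⟩
          exact hz.2 j rfl
        · rintro ⟨j, hj⟩
          exact hz.1 (stmt15_pair_eq hj).1.symm
      rw [hpz, zero_mul]
  rw [tsum_eq_sum hsupp, Finset.sum_insert hxnot, Finset.sum_image hinj]
  rw [add_comm]
  congr 1
  · apply Finset.sum_congr rfl
    intro j _
    by_cases h : x ++ [i] ++ [j] = y
    · simp [h]
    · rw [if_neg h, if_neg h, hp_up]
  · by_cases h : x = y
    · simp [h]
    · rw [if_neg h, if_neg h, hp_down]

lemma stmt15_f_nonneg (hp : ∀ x y, 0 ≤ p x y)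
    (hf1 : ∀ x y : List (Fin d), f 1 x y = p x y)
    (hfs : ∀ n : ℕ, 1 ≤ n → ∀ x y : List (Fin d),
      f (n + 1) x y = ∑' z : List (Fin d), if z = y then 0 else p x z * f n z y) :
    ∀ n, 1 ≤ n → ∀ x y, 0 ≤ f n x y := by
  intro n hn
  induction n, hn using Nat.le_induction with
  | base => intro x y; rw [hf1]; exact hp x y
  | succ n hn ih =>
    intro x y
    rw [hfs n hn]
    apply tsum_nonneg
    intro z
    by_cases hz : z = y
    · simp [hz]
    · rw [if_neg hz]
      exact mul_nonneg (hp _ _) (ih _ _)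
lemma stmt15_trans
    (hp_down : ∀ (x : List (Fin d)) (i : Fin d), p (x ++ [i]) x = km i / (km i + K))
    (hp_zero : ∀ x y : List (Fin d),
      (¬ ∃ i : Fin d, y = x ++ [i]) → (¬ ∃ i : Fin d, x = y ++ [i]) → p x y = 0)
    (hf1 : ∀ x y : List (Fin d), f 1 x y = p x y)
    (hrec : ∀ (n : ℕ), 1 ≤ n → ∀ (x : List (Fin d)) (i : Fin d) (y : List (Fin d)),
      f (n+1) (x ++ [i]) y =
      (∑ j : Fin d, if x ++ [i] ++ [j] = y then 0
        else kp j / (km i + K) * f n (x ++ [i] ++ [j]) y)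
      + (if x = y then 0 else km i / (km i + K) * f n x y)) :
    ∀ n, 1 ≤ n → ∀ (w : List (Fin d)), w ≠ [] → ∀ x x',
      f n (x ++ w) x = f n (x' ++ w) x' := by
  intro n hn
  induction n, hn using Nat.le_induction with
  | base =>
    intro w hw x x'
    rcases w.eq_nil_or_concat with rfl | ⟨w', j, rfl⟩
    · exact absurd rfl hw
    rw [List.concat_eq_append]
    rcases w'.eq_nil_or_concat with rfl | ⟨w'', l, rfl⟩
    · simp only [List.nil_append]
      rw [hf1, hf1, hp_down, hp_down]
    · have hz : ∀ y : List (Fin d), p (y ++ (w'' ++ [l] ++ [j])) y = 0 := by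
        intro y
        apply hp_zero
        · rintro ⟨a, ha⟩
          have := congrArg List.length ha
          simp at this
        · rintro ⟨a, ha⟩
          rw [← List.append_assoc, ← List.append_assoc] at ha
          have h2 := List.append_inj' ha rfl
          have := congrArg List.length h2.1
          simp at this
      rw [List.concat_eq_append, hf1, hf1, hz, hz]
  | succ n hn ih =>
    intro w hw x x'
    rcases w.eq_nil_or_concat with rfl | ⟨w', j, rfl⟩
    · exact absurd rfl hw
    rw [List.concat_eq_append, ← List.append_assoc, ← List.append_assoc]
    rw [hrec n hn, hrec n hn]
    have hchild : ∀ (y : List (Fin d)) (l : Fin d), ¬ (y ++ w' ++ [j] ++ [l] = y) := by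
      intro y l h
      have := congrArg List.length h
      simp at this
    congr 1
    · apply Finset.sum_congr rfl
      intro l _
      rw [if_neg (hchild x l), if_neg (hchild x' l)]
      congr 1
      have h1 : x ++ w' ++ [j] ++ [l] = x ++ (w' ++ [j] ++ [l]) := by simp [List.append_assoc]
      have h2 : x' ++ w' ++ [j] ++ [l] = x' ++ (w' ++ [j] ++ [l]) := by simp [List.append_assoc]
      rw [h1, h2]
      exact ih (w' ++ [j] ++ [l]) (by simp) x x'
    · rcases w'.eq_nil_or_concat with rfl | ⟨w'', l, rfl⟩
      · simp
      · rw [List.concat_eq_append]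
        have hne : ∀ y : List (Fin d), ¬ (y ++ (w'' ++ [l]) = y) := by
          intro y h
          have := congrArg List.length h
          simp at this
        rw [if_neg (hne x), if_neg (hne x')]
        congr 1
        exact ih (w'' ++ [l]) (by simp) x x'
lemma stmt15_conv
    (hp_down : ∀ (x : List (Fin d)) (i : Fin d), p (x ++ [i]) x = km i / (km i + K))
    (hp_zero : ∀ x y : List (Fin d),
      (¬ ∃ i : Fin d, y = x ++ [i]) → (¬ ∃ i : Fin d, x = y ++ [i]) → p x y = 0)
    (hf1 : ∀ x y : List (Fin d), f 1 x y = p x y)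
    (hrec : ∀ (n : ℕ), 1 ≤ n → ∀ (x : List (Fin d)) (i : Fin d) (y : List (Fin d)),
      f (n+1) (x ++ [i]) y =
      (∑ j : Fin d, if x ++ [i] ++ [j] = y then 0
        else kp j / (km i + K) * f n (x ++ [i] ++ [j]) y)
      + (if x = y then 0 else km i / (km i + K) * f n x y)) :
    ∀ (n : ℕ) (x : List (Fin d)) (i : Fin d) (v : List (Fin d)), v ≠ [] →
      f (n+1) (x ++ [i] ++ v) x
        = ∑ b ∈ Finset.range n, f (b+1) (x ++ [i] ++ v) (x ++ [i]) * f (n-b) (x ++ [i]) x := by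
  intro n
  induction n with
  | zero =>
    intro x i v hv
    rw [Finset.range_zero, Finset.sum_empty, hf1]
    apply hp_zero
    · rintro ⟨j, hj⟩
      have := congrArg List.length hj
      simp at this
    · rintro ⟨j, hj⟩
      rw [List.append_assoc] at hj
      have := List.append_cancel_left hj
      have hl := congrArg List.length this
      simp at hl
      exact hv hl
  | succ n ih =>
    intro x i v hv
    rcases v.eq_nil_or_concat with rfl | ⟨v', l, rfl⟩
    · exact absurd rfl hv
    rw [List.concat_eq_append]
    have e1 : x ++ [i] ++ (v' ++ [l]) = (x ++ [i] ++ v') ++ [l] := (List.append_assoc _ _ _).symm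
    rw [e1]
    -- expand LHS
    rw [hrec (n+1) (by omega)]
    have hcx : ∀ j : Fin d, ¬ ((x ++ [i] ++ v') ++ [l] ++ [j] = x) := by
      intro j h
      have := congrArg List.length h
      simp at this
    have hBx : ¬ (x ++ [i] ++ v' = x) := by
      intro h
      have := congrArg List.length h
      simp at this
    rw [if_neg hBx]
    -- children via ih
    have hch : ∀ j : Fin d, f (n+1) ((x ++ [i] ++ v') ++ [l] ++ [j]) x
        = ∑ b ∈ Finset.range n,
            f (b+1) ((x ++ [i] ++ v') ++ [l] ++ [j]) (x ++ [i]) * f (n-b) (x ++ [i]) x := by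
      intro j
      have echild : (x ++ [i] ++ v') ++ [l] ++ [j] = x ++ [i] ++ (v' ++ [l] ++ [j]) := by
        simp [List.append_assoc]
      rw [echild]
      exact ih x i (v' ++ [l] ++ [j]) (by simp)
    have hLs : (∑ j : Fin d, if (x ++ [i] ++ v') ++ [l] ++ [j] = x then 0
          else kp j / (km l + K) * f (n+1) ((x ++ [i] ++ v') ++ [l] ++ [j]) x)
        = ∑ j : Fin d, kp j / (km l + K) * (∑ b ∈ Finset.range n,
            f (b+1) ((x ++ [i] ++ v') ++ [l] ++ [j]) (x ++ [i]) * f (n-b) (x ++ [i]) x) :=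
      Finset.sum_congr rfl (fun j _ => by rw [if_neg (hcx j), hch j])
    rw [hLs]
    -- RHS: peel off b = 0
    rw [Finset.sum_range_succ']
    simp only [Nat.sub_zero]
    -- expand f (b+2) on RHS
    have hrhs : ∀ b ∈ Finset.range n,
        f (b+1+1) ((x ++ [i] ++ v') ++ [l]) (x ++ [i]) * f (n+1-(b+1)) (x ++ [i]) x
        = ((∑ j : Fin d, kp j / (km l + K) * f (b+1) ((x ++ [i] ++ v') ++ [l] ++ [j]) (x ++ [i]))
            + (if x ++ [i] ++ v' = x ++ [i] then 0
               else km l / (km l + K) * f (b+1) (x ++ [i] ++ v') (x ++ [i])))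
            * f (n-b) (x ++ [i]) x := by
      intro b _
      have hcx2 : ∀ j : Fin d, ¬ ((x ++ [i] ++ v') ++ [l] ++ [j] = x ++ [i]) := by
        intro j h
        have := congrArg List.length h
        simp at this
      rw [hrec (b+1) (by omega) (x ++ [i] ++ v') l (x ++ [i])]
      have : (∑ j : Fin d, if (x ++ [i] ++ v') ++ [l] ++ [j] = x ++ [i] then 0
            else kp j / (km l + K) * f (b+1) ((x ++ [i] ++ v') ++ [l] ++ [j]) (x ++ [i]))
          = ∑ j : Fin d, kp j / (km l + K) * f (b+1) ((x ++ [i] ++ v') ++ [l] ++ [j]) (x ++ [i]) :=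
        Finset.sum_congr rfl (fun j _ => by rw [if_neg (hcx2 j)])
      rw [this, show n + 1 - (b+1) = n - b from by omega]
    rw [Finset.sum_congr rfl hrhs]
    by_cases hv' : v' = []
    · -- parent of Y is x ++ [i]
      subst hv'
      simp only [List.append_nil] at *
      simp only [eq_self_iff_true, if_true, zero_add, add_zero]
      rw [hf1, hp_down]
      simp only [add_zero, Finset.mul_sum, Finset.sum_mul, mul_assoc]
      rw [Finset.sum_comm]
    · -- parent is deeper
      have hBxi : ¬ (x ++ [i] ++ v' = x ++ [i]) := fun h => hv' (List.append_right_eq_self.mp h)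
      simp only [if_neg hBxi]
      have hf1Y : f 1 ((x ++ [i] ++ v') ++ [l]) (x ++ [i]) = 0 := by
        rw [hf1]
        apply hp_zero
        · rintro ⟨j, hj⟩
          have := congrArg List.length hj
          simp at this
        · rintro ⟨j, hj⟩
          have := List.append_inj' hj rfl
          exact hBxi this.1
      rw [hf1Y, zero_mul, add_zero]
      rw [ih x i v' hv']
      simp only [add_mul, Finset.sum_mul, Finset.sum_add_distrib, Finset.mul_sum, mul_assoc]
      rw [Finset.sum_comm]
end stmt15aux

lemma stmt15_double (N : ℕ) (x y : ℕ → ℝ) (hx : ∀ b, 0 ≤ x b) (hy : ∀ c, 0 ≤ y c) :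
    ∑ n ∈ Finset.range N, ∑ b ∈ Finset.range n, x b * y (n - 1 - b)
      ≤ (∑ b ∈ Finset.range N, x b) * (∑ c ∈ Finset.range N, y c) := by
  have hext : ∀ n ∈ Finset.range N,
      ∑ b ∈ Finset.range n, x b * y (n - 1 - b)
        = ∑ b ∈ Finset.range N, if b < n then x b * y (n - 1 - b) else 0 := by
    intro n hn
    rw [← Finset.sum_filter]
    congr 1
    ext b
    simp only [Finset.mem_filter, Finset.mem_range] at *
    omega
  rw [Finset.sum_congr rfl hext, Finset.sum_comm]
  have hib : ∀ b, ∀ N : ℕ, ∑ n ∈ Finset.range N, (if b < n then x b * y (n - 1 - b) else 0)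
      = x b * ∑ c ∈ Finset.range (N - (b+1)), y c := by
    intro b N
    induction N with
    | zero => simp
    | succ N ihN =>
      rw [Finset.sum_range_succ, ihN]
      by_cases h : b < N
      · rw [if_pos h, show N + 1 - (b+1) = (N - (b+1)) + 1 from by omega,
          Finset.sum_range_succ, mul_add, show N - 1 - b = N - (b+1) from by omega]
      · rw [if_neg h, add_zero, show N + 1 - (b+1) = N - (b+1) from by omega]
  rw [Finset.sum_congr rfl (fun b _ => hib b N), Finset.sum_mul]
  apply Finset.sum_le_sum
  intro b _
  apply mul_le_mul_of_nonneg_left _ (hx b)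
  apply Finset.sum_le_sum_of_subset_of_nonneg
  · apply Finset.range_subset_range.2; omega
  · intro c _ _; exact hy c

lemma stmt15_main (d : ℕ) (hd : 1 ≤ d) (kp km : Fin d → ℝ)
    (hkp : ∀ i, 0 < kp i) (hkm : ∀ i, 0 < km i)
    (K : ℝ) (hK : K = ∑ i : Fin d, kp i)
    (m : ℝ) (hm : 0 < m) (hmeq : ∑ r : Fin d, kp r / (m + km r) = 1)
    (a : ℕ → Fin d → ℝ)
    (ha1 : ∀ i, a 1 i = km i / (km i + K))
    (harec : ∀ (n : ℕ) (i : Fin d), a (n+2) i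
      = ∑ j : Fin d, kp j / (km i + K) * ∑ b ∈ Finset.range n, a (b+1) j * a (n-b) i)
    (hann : ∀ n i, 0 ≤ a (n+1) i) :
    ∀ i : Fin d,
      (∑' n : ℕ, a (n + 1) i) = km i / (m + km i) ∧
      0 < (∑' n : ℕ, a (n + 1) i) ∧
      (∑' n : ℕ, a (n + 1) i) < 1 := by
  have hne : (Finset.univ : Finset (Fin d)).Nonempty := by
    have : Nonempty (Fin d) := ⟨⟨0, hd⟩⟩
    exact Finset.univ_nonempty
  have hKpos : 0 < K := by
    rw [hK]; exact Finset.sum_pos (fun i _ => hkp i) hne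
  have hkmK : ∀ i, 0 < km i + K := fun i => by have := hkm i; linarith
  have hmkm : ∀ i, 0 < m + km i := fun i => by have := hkm i; linarith
  set q : Fin d → ℝ := fun i => km i / (m + km i) with hq
  have hq_pos : ∀ i, 0 < q i := fun i => div_pos (hkm i) (hmkm i)
  have hq_lt1 : ∀ i, q i < 1 := fun i => (div_lt_one (hmkm i)).2 (by have := hkm i; linarith)
  have hsum_q : ∑ j : Fin d, kp j * q j = K - m := by
    have : ∀ j : Fin d, kp j * q j = kp j - m * (kp j / (m + km j)) := by
      intro j
      have h0 : m + km j ≠ 0 := (hmkm j).ne'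
      rw [hq]
      field_simp
      ring
    rw [Finset.sum_congr rfl (fun j _ => this j), Finset.sum_sub_distrib, ← Finset.mul_sum,
      hmeq, mul_one, hK]
  have hfix : ∀ i, km i / (km i + K) + ∑ j : Fin d, kp j / (km i + K) * (q j * q i) = q i := by
    intro i
    have h1 : ∀ j : Fin d, kp j / (km i + K) * (q j * q i)
        = (kp j * q j) * (q i / (km i + K)) := fun j => by ring
    rw [Finset.sum_congr rfl (fun j _ => h1 j), ← Finset.sum_mul, hsum_q, hq]
    have h2 := hkmK i
    have h3 := hmkm i
    field_simp
    ring
  -- partial sums bounded by q i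
  have hS : ∀ (N : ℕ) (i : Fin d), ∑ n ∈ Finset.range N, a (n+1) i ≤ q i := by
    intro N
    induction N with
    | zero => intro i; simpa using le_of_lt (hq_pos i)
    | succ N ihN =>
      intro i
      rw [Finset.sum_range_succ']
      have hSnn : ∀ j, 0 ≤ ∑ n ∈ Finset.range N, a (n+1) j :=
        fun j => Finset.sum_nonneg (fun n _ => hann n j)
      have step1 : ∑ n ∈ Finset.range N, a (n+1+1) i
          ≤ ∑ j : Fin d, kp j / (km i + K) * (q j * q i) := by
        have e1 : ∀ n ∈ Finset.range N, a (n+1+1) i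
            = ∑ j : Fin d, kp j / (km i + K) * ∑ b ∈ Finset.range n, a (b+1) j * a (n-b) i :=
          fun n _ => harec n i
        rw [Finset.sum_congr rfl e1, Finset.sum_comm]
        apply Finset.sum_le_sum
        intro j _
        rw [← Finset.mul_sum]
        apply mul_le_mul_of_nonneg_left _ (div_nonneg (hkp j).le (hkmK i).le)
        have e2 : ∀ n ∈ Finset.range N, ∑ b ∈ Finset.range n, a (b+1) j * a (n-b) i
            = ∑ b ∈ Finset.range n, a (b+1) j * a ((n-1-b)+1) i := by
          intro n _
          apply Finset.sum_congr rfl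
          intro b hb
          rw [Finset.mem_range] at hb
          rw [show n - b = (n-1-b)+1 from by omega]
        rw [Finset.sum_congr rfl e2]
        calc ∑ n ∈ Finset.range N, ∑ b ∈ Finset.range n, a (b+1) j * a ((n-1-b)+1) i
            ≤ (∑ b ∈ Finset.range N, a (b+1) j) * (∑ c ∈ Finset.range N, a (c+1) i) :=
              stmt15_double N _ _ (fun b => hann b j) (fun c => hann c i)
          _ ≤ q j * q i := by
              apply mul_le_mul (ihN j) (ihN i) (hSnn i) (le_of_lt (hq_pos j))
      calc ∑ n ∈ Finset.range N, a (n+1+1) i + a 1 i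
          ≤ ∑ j : Fin d, kp j / (km i + K) * (q j * q i) + km i / (km i + K) := by
            rw [ha1 i]; linarith [step1]
        _ = q i := by rw [add_comm]; exact hfix i
  have hsummable : ∀ i, Summable (fun n => a (n+1) i) :=
    fun i => summable_of_sum_range_le (fun n => hann n i) (fun N => hS N i)
  set Fr : Fin d → ℝ := fun i => ∑' n : ℕ, a (n+1) i with hFr
  have hFr_nonneg : ∀ i, 0 ≤ Fr i := fun i => tsum_nonneg (fun n => hann n i)
  have hFr_le : ∀ i, Fr i ≤ q i := fun i => Summable.tsum_le_of_sum_range_le (hsummable i) (fun N => hS N i)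
  -- the ENNReal identity
  have hAF : ∀ i, ∑' n : ℕ, ENNReal.ofReal (a (n+1) i) = ENNReal.ofReal (Fr i) := by
    intro i
    rw [hFr, ENNReal.ofReal_tsum_of_nonneg (fun n => hann n i) (hsummable i)]
  have key : ∀ i, ENNReal.ofReal (Fr i)
      = ENNReal.ofReal (km i / (km i + K))
        + ∑ j : Fin d, ENNReal.ofReal (kp j / (km i + K))
            * (ENNReal.ofReal (Fr j) * ENNReal.ofReal (Fr i)) := by
    intro i
    have hstep0 : ENNReal.ofReal (Fr i) = ENNReal.ofReal (a (0+1) i)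
        + ∑' n : ℕ, ENNReal.ofReal (a (n+1+1) i) := by
      rw [← hAF i]
      exact tsum_eq_zero_add' ENNReal.summable
    have hstep : ∀ n : ℕ, ENNReal.ofReal (a (n+1+1) i)
        = ∑ j : Fin d, ENNReal.ofReal (kp j / (km i + K))
            * ∑' b : ℕ, (if b < n then ENNReal.ofReal (a (b+1) j) * ENNReal.ofReal (a (n-b) i)
                else 0) := by
      intro n
      rw [show (n+1+1) = n+2 from rfl, harec n i,
        ENNReal.ofReal_sum_of_nonneg (fun j _ => mul_nonneg (div_nonneg (hkp j).le (hkmK i).le)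
          (Finset.sum_nonneg (fun b hb => mul_nonneg (hann b j)
            (by rw [Finset.mem_range] at hb; rw [show n - b = (n-1-b)+1 from by omega];
                exact hann _ i))))]
      apply Finset.sum_congr rfl
      intro j _
      rw [ENNReal.ofReal_mul (div_nonneg (hkp j).le (hkmK i).le)]
      congr 1
      have h2 : ∑' b : ℕ, (if b < n then ENNReal.ofReal (a (b+1) j) * ENNReal.ofReal (a (n-b) i)
            else 0)
          = ∑ b ∈ Finset.range n, (if b < n then ENNReal.ofReal (a (b+1) j)
              * ENNReal.ofReal (a (n-b) i) else 0) := by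
        apply tsum_eq_sum
        intro b hb
        rw [Finset.mem_range] at hb
        rw [if_neg hb]
      rw [h2]
      rw [ENNReal.ofReal_sum_of_nonneg (fun b hb => mul_nonneg (hann b j)
        (by rw [Finset.mem_range] at hb; rw [show n - b = (n-1-b)+1 from by omega];
            exact hann _ i))]
      apply Finset.sum_congr rfl
      intro b hb
      rw [Finset.mem_range] at hb
      rw [if_pos hb, ← ENNReal.ofReal_mul (hann b j)]
    conv_lhs => rw [hstep0, tsum_congr hstep, Summable.tsum_finsetSum (fun j _ => ENNReal.summable)]
    congr 1
    · rw [show (0+1 : ℕ) = 1 from rfl, ha1 i]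
    apply Finset.sum_congr rfl
    intro j _
    rw [ENNReal.tsum_mul_left]
    congr 1
    have hinj : Function.Injective (fun uv : ℕ × ℕ => ((uv.1 + uv.2 + 1, uv.1) : ℕ × ℕ)) := by
      rintro ⟨u, v⟩ ⟨u', v'⟩ h
      simp only [Prod.mk.injEq] at h ⊢
      omega
    have hsupp : Function.support
        (fun nb : ℕ × ℕ => if nb.2 < nb.1 then ENNReal.ofReal (a (nb.2+1) j)
            * ENNReal.ofReal (a (nb.1 - nb.2) i) else 0)
        ⊆ Set.range (fun uv : ℕ × ℕ => ((uv.1 + uv.2 + 1, uv.1) : ℕ × ℕ)) := by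
      rintro ⟨n, b⟩ hnb
      simp only [Function.mem_support] at hnb
      by_cases h : b < n
      · refine ⟨(b, n - 1 - b), ?_⟩
        show (b + (n - 1 - b) + 1, b) = (n, b)
        rw [show b + (n - 1 - b) + 1 = n from by omega]
      · rw [if_neg h] at hnb; exact absurd rfl hnb
    calc ∑' (n : ℕ) (b : ℕ), (if b < n then ENNReal.ofReal (a (b+1) j)
            * ENNReal.ofReal (a (n-b) i) else 0)
        = ∑' nb : ℕ × ℕ, (if nb.2 < nb.1 then ENNReal.ofReal (a (nb.2+1) j)
            * ENNReal.ofReal (a (nb.1 - nb.2) i) else 0) :=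
          (ENNReal.tsum_prod' (f := fun nb : ℕ × ℕ => if nb.2 < nb.1
            then ENNReal.ofReal (a (nb.2+1) j) * ENNReal.ofReal (a (nb.1 - nb.2) i) else 0)).symm
      _ = ∑' uv : ℕ × ℕ, (if uv.1 < uv.1 + uv.2 + 1 then ENNReal.ofReal (a (uv.1+1) j)
            * ENNReal.ofReal (a (uv.1 + uv.2 + 1 - uv.1) i) else 0) :=
          (Function.Injective.tsum_eq hinj hsupp).symm
      _ = ∑' uv : ℕ × ℕ, ENNReal.ofReal (a (uv.1+1) j) * ENNReal.ofReal (a (uv.2+1) i) := by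
          apply tsum_congr
          intro uv
          rw [if_pos (by omega), show uv.1 + uv.2 + 1 - uv.1 = uv.2 + 1 from by omega]
      _ = ∑' (u : ℕ) (v : ℕ), ENNReal.ofReal (a (u+1) j) * ENNReal.ofReal (a (v+1) i) :=
          ENNReal.tsum_prod' (f := fun uv : ℕ × ℕ =>
            ENNReal.ofReal (a (uv.1+1) j) * ENNReal.ofReal (a (uv.2+1) i))
      _ = ∑' (u : ℕ), ENNReal.ofReal (a (u+1) j) * ENNReal.ofReal (Fr i) := by
          apply tsum_congr
          intro u
          rw [ENNReal.tsum_mul_left, hAF i]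
      _ = ENNReal.ofReal (Fr j) * ENNReal.ofReal (Fr i) := by
          rw [ENNReal.tsum_mul_right, hAF j]
  -- convert key to a real equation
  have hcnn : ∀ i j : Fin d, 0 ≤ kp j / (km i + K) * (Fr j * Fr i) :=
    fun i j => mul_nonneg (div_nonneg (hkp j).le (hkmK i).le)
      (mul_nonneg (hFr_nonneg j) (hFr_nonneg i))
  have hre : ∀ i, Fr i = km i / (km i + K) + ∑ j : Fin d, kp j / (km i + K) * (Fr j * Fr i) := by
    intro i
    have hofs : ENNReal.ofReal (Fr i)
        = ENNReal.ofReal (km i / (km i + K) + ∑ j : Fin d, kp j / (km i + K) * (Fr j * Fr i)) := by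
      rw [ENNReal.ofReal_add (div_nonneg (hkm i).le (hkmK i).le)
        (Finset.sum_nonneg (fun j _ => hcnn i j)),
        ENNReal.ofReal_sum_of_nonneg (fun j _ => hcnn i j)]
      rw [key i]
      congr 1
      apply Finset.sum_congr rfl
      intro j _
      rw [ENNReal.ofReal_mul (div_nonneg (hkp j).le (hkmK i).le),
        ENNReal.ofReal_mul (hFr_nonneg j)]
    exact (ENNReal.ofReal_eq_ofReal_iff (hFr_nonneg i)
      (add_nonneg (div_nonneg (hkm i).le (hkmK i).le)
        (Finset.sum_nonneg (fun j _ => hcnn i j)))).mp hofs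
  set T : ℝ := ∑ j : Fin d, kp j * Fr j with hT
  have hT_le : T ≤ K - m := by
    rw [hT, ← hsum_q]
    exact Finset.sum_le_sum (fun j _ => mul_le_mul_of_nonneg_left (hFr_le j) (hkp j).le)
  have hFr_eq : ∀ i, Fr i * (km i + K - T) = km i := by
    intro i
    have h := hre i
    have h2 : ∑ j : Fin d, kp j / (km i + K) * (Fr j * Fr i)
        = T * (Fr i / (km i + K)) := by
      rw [hT, Finset.sum_mul]
      apply Finset.sum_congr rfl
      intro j _
      ring
    rw [h2] at h
    have hK0 : (km i + K) ≠ 0 := (hkmK i).ne'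
    field_simp at h
    linear_combination h
  set m' : ℝ := K - T with hm'
  have hm'_ge : m ≤ m' := by rw [hm']; linarith
  have hm'_pos : 0 < m' := lt_of_lt_of_le hm hm'_ge
  have hden' : ∀ j, 0 < m' + km j := fun j => by have := hkm j; linarith
  have hFr_val : ∀ i, Fr i = km i / (m' + km i) := by
    intro i
    rw [eq_div_iff (hden' i).ne']
    have h := hFr_eq i
    rw [hm']
    linear_combination h
  have hsum' : ∑ j : Fin d, kp j / (m' + km j) = 1 := by
    have h1 : T = ∑ j : Fin d, kp j * (km j / (m' + km j)) :=
      Finset.sum_congr rfl (fun j _ => by rw [← hFr_val j])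
    have h2 : ∀ j : Fin d, kp j * (km j / (m' + km j))
        = kp j - m' * (kp j / (m' + km j)) := by
      intro j
      have h0 : m' + km j ≠ 0 := (hden' j).ne'
      field_simp
      ring
    rw [Finset.sum_congr rfl (fun j _ => h2 j), Finset.sum_sub_distrib, ← Finset.mul_sum,
      ← hK] at h1
    have h4 : m' * (∑ j : Fin d, kp j / (m' + km j)) = m' * 1 := by
      rw [mul_one]
      linarith [h1]
    exact mul_left_cancel₀ hm'_pos.ne' h4
  have hmm' : m' = m := by
    by_contra hne'
    have hlt : m < m' := lt_of_le_of_ne hm'_ge (Ne.symm hne')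
    have hstrict : ∑ j : Fin d, kp j / (m' + km j) < ∑ j : Fin d, kp j / (m + km j) := by
      apply Finset.sum_lt_sum_of_nonempty hne
      intro j _
      exact div_lt_div_of_pos_left (hkp j) (hmkm j) (by linarith)
    rw [hsum', hmeq] at hstrict
    exact lt_irrefl 1 hstrict
  intro i
  have hval : Fr i = km i / (m + km i) := by rw [hFr_val i, hmm']
  have hgoal : (∑' n : ℕ, a (n + 1) i) = km i / (m + km i) := hval
  refine ⟨hgoal, ?_, ?_⟩
  · rw [hgoal]
    exact div_pos (hkm i) (hmkm i)
  · rw [hgoal]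
    rw [div_lt_one (hmkm i)]
    linarith [hkm i]

/-- Explicit value of the first-passage probabilities in the transient
regime: assume `α = Σ i, k⁺ i / k⁻ i > 1` and let `m` be the unique positive real with
`Σ r, k⁺ r / (m + k⁻ r) = 1`.  Then for every `i`, the first-passage probability satisfies
`F([i], o) = k⁻ i / (m + k⁻ i)`; in particular `0 < F([i], o) < 1`.  Here
`F(x,y) = Σ_{n≥1} fⁿ(x,y)` with `f¹ = p` and `fⁿ⁺¹(x,y) = Σ_{z≠y} p(x,z)·fⁿ(z,y)`. -/
theorem stmt15 (d : ℕ) (hd : 1 ≤ d) (kp km : Fin d → ℝ)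
    (hkp : ∀ i, 0 < kp i) (hkm : ∀ i, 0 < km i)
    (K : ℝ) (hK : K = ∑ i : Fin d, kp i)
    (hα : 1 < ∑ i : Fin d, kp i / km i)
    (m : ℝ) (hm : 0 < m) (hmeq : ∑ r : Fin d, kp r / (m + km r) = 1)
    (p : List (Fin d) → List (Fin d) → ℝ)
    (hp_root : ∀ i : Fin d, p [] [i] = kp i / K)
    (hp_up : ∀ (x : List (Fin d)) (i j : Fin d),
      p (x ++ [i]) (x ++ [i] ++ [j]) = kp j / (km i + K))
    (hp_down : ∀ (x : List (Fin d)) (i : Fin d), p (x ++ [i]) x = km i / (km i + K))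
    (hp_zero : ∀ x y : List (Fin d),
      (¬ ∃ i : Fin d, y = x ++ [i]) → (¬ ∃ i : Fin d, x = y ++ [i]) → p x y = 0)
    (f : ℕ → List (Fin d) → List (Fin d) → ℝ)
    (hf1 : ∀ x y : List (Fin d), f 1 x y = p x y)
    (hfs : ∀ n : ℕ, 1 ≤ n → ∀ x y : List (Fin d),
      f (n + 1) x y = ∑' z : List (Fin d), if z = y then 0 else p x z * f n z y) :
    ∀ i : Fin d,
      (∑' n : ℕ, f (n + 1) [i] []) = km i / (m + km i) ∧
      0 < (∑' n : ℕ, f (n + 1) [i] []) ∧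
      (∑' n : ℕ, f (n + 1) [i] []) < 1 := by
  have hne : (Finset.univ : Finset (Fin d)).Nonempty := by
    have : Nonempty (Fin d) := ⟨⟨0, hd⟩⟩
    exact Finset.univ_nonempty
  have hKpos : 0 < K := by
    rw [hK]; exact Finset.sum_pos (fun i _ => hkp i) hne
  have hpn := stmt15_p_nonneg kp km K p hkp hkm hKpos hp_root hp_up hp_down hp_zero
  have hrec := stmt15_rec2 kp km K p f hKpos hp_up hp_down hp_zero hfs
  have hfn := stmt15_f_nonneg p f hpn hf1 hfs
  have htrans := stmt15_trans kp km K p f hp_down hp_zero hf1 hrec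
  have hconv := stmt15_conv kp km K p f hp_down hp_zero hf1 hrec
  have ha1 : ∀ i : Fin d, f 1 [i] [] = km i / (km i + K) := by
    intro i
    rw [hf1]
    simpa using hp_down [] i
  have hann : ∀ (n : ℕ) (i : Fin d), 0 ≤ f (n+1) [i] [] :=
    fun n i => hfn (n+1) (by omega) _ _
  have harec : ∀ (n : ℕ) (i : Fin d), f (n+2) [i] []
      = ∑ j : Fin d, kp j / (km i + K)
          * ∑ b ∈ Finset.range n, f (b+1) [j] [] * f (n-b) [i] [] := by
    intro n i
    have h : f (n+2) [i] []
        = (∑ j : Fin d, if [i] ++ [j] = ([] : List (Fin d)) then 0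
            else kp j / (km i + K) * f (n+1) ([i] ++ [j]) [])
          + (if ([] : List (Fin d)) = [] then 0
             else km i / (km i + K) * f (n+1) [] []) := by
      have h0 := hrec (n+1) (by omega) [] i []
      simpa using h0
    rw [h, if_pos rfl, add_zero]
    apply Finset.sum_congr rfl
    intro j _
    rw [if_neg (by simp)]
    congr 1
    have hc : f (n+1) ([i] ++ [j]) []
        = ∑ b ∈ Finset.range n, f (b+1) ([i] ++ [j]) [i] * f (n-b) [i] [] := by
      have h0 := hconv n [] i [j] (by simp)
      simpa using h0
    rw [hc]
    apply Finset.sum_congr rfl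
    intro b _
    congr 1
    have ht := htrans (b+1) (by omega) [j] (by simp) [i] []
    simpa using ht
  exact stmt15_main d hd kp km hkp hkm K hK m hm hmeq (fun n i => f n [i] []) ha1 harec hann
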